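/- One has lim_{k→∞} 2^{k+1}·(1 − c_k) = π. -/

import Mathlib

open Real Filter Topology

private lemma tan_add'' {α β : ℝ} (hα : Real.cos α ≠ 0) (hβ : Real.cos β ≠ 0)
    (hαβ : Real.cos (α + β) ≠ 0) :
    Real.tan (α + β) = (Real.tan α + Real.tan β) / (1 - Real.tan α * Real.tan β) := by
  have h : Real.cos α * Real.cos β - Real.sin α * Real.sin β ≠ 0 := by
    rw [← Real.cos_add]; exact hαβ
  rw [Real.tan_eq_sin_div_cos, Real.tan_eq_sin_div_cos, Real.tan_eq_sin_div_cos,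
    Real.sin_add, Real.cos_add]
  field_simp

private lemma sqrt_two_add_two_cos {θ : ℝ} (h1 : 0 ≤ θ) (h2 : θ ≤ π) :
    Real.sqrt (2 + 2 * Real.cos θ) = 2 * Real.cos (θ / 2) := by
  have hc : 0 ≤ Real.cos (θ / 2) := Real.cos_nonneg_of_mem_Icc ⟨by linarith, by linarith⟩
  have hsq : Real.cos (θ / 2) ^ 2 = 1 / 2 + Real.cos (2 * (θ / 2)) / 2 := Real.cos_sq _
  have key : 2 + 2 * Real.cos θ = (2 * Real.cos (θ / 2)) ^ 2 := by
    have : (2 : ℝ) * (θ / 2) = θ := by ring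
    rw [this] at hsq; nlinarith
  rw [key, Real.sqrt_sq (by linarith)]

private lemma sqrt_two_sub_two_cos {θ : ℝ} (h1 : 0 ≤ θ) (h2 : θ ≤ π) :
    Real.sqrt (2 - 2 * Real.cos θ) = 2 * Real.sin (θ / 2) := by
  have hs : 0 ≤ Real.sin (θ / 2) := Real.sin_nonneg_of_nonneg_of_le_pi (by linarith) (by linarith)
  have hsq : Real.cos (θ / 2) ^ 2 = 1 / 2 + Real.cos (2 * (θ / 2)) / 2 := Real.cos_sq _
  have hpyth := Real.sin_sq_add_cos_sq (θ / 2)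
  have key : 2 - 2 * Real.cos θ = (2 * Real.sin (θ / 2)) ^ 2 := by
    have : (2 : ℝ) * (θ / 2) = θ := by ring
    rw [this] at hsq; nlinarith
  rw [key, Real.sqrt_sq (by linarith)]

theorem two_pow_mul_error_tendsto_pi (a : ℕ → ℝ)
    (ha1 : a 1 = Real.sqrt 2)
    (ha : ∀ k ≥ 1, a (k + 1) = Real.sqrt (2 + a k))
    (b : ℕ → ℝ)
    (hb : ∀ k ≥ 1, b k = Real.sqrt (2 - a k) / a (k + 1))
    (c : ℕ → ℝ)
    (hc1 : c 1 = b 1)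
    (hc : ∀ k ≥ 1, c (k + 1) = (c k + b (k + 1)) / (1 - c k * b (k + 1))) :
    Tendsto (fun k : ℕ => 2 ^ (k + 1) * (1 - c k)) atTop (𝓝 π) := by
  have hpi : (0 : ℝ) < π := Real.pi_pos
  -- basic bounds on π / 2 ^ m
  have hθpos : ∀ m : ℕ, 0 < π / 2 ^ m := fun m => by positivity
  have hθle : ∀ m : ℕ, 1 ≤ m → π / 2 ^ m ≤ π / 2 := by
    intro m hm
    apply div_le_div_of_nonneg_left hpi.le (by norm_num)
    calc (2 : ℝ) = 2 ^ 1 := by norm_num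
    _ ≤ 2 ^ m := by apply pow_le_pow_right₀ (by norm_num) hm
  have hhalf : ∀ m : ℕ, (π / 2 ^ m) / 2 = π / 2 ^ (m + 1) := by
    intro m; rw [pow_succ]; ring
  -- a k = 2 cos (π / 2^(k+1))
  have ha' : ∀ k, 1 ≤ k → a k = 2 * Real.cos (π / 2 ^ (k + 1)) := by
    intro k hk
    induction k with
    | zero => omega
    | succ n ih =>
      rcases Nat.lt_or_ge n 1 with hn | hn
      · interval_cases n
        rw [ha1, show (0:ℕ)+1+1 = 2 from rfl, show ((2:ℝ)^2 = 4) by norm_num,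
          Real.cos_pi_div_four]; ring
      · have hθ1 : 0 ≤ π / 2 ^ (n + 1) := (hθpos _).le
        have hθ2 : π / 2 ^ (n + 1) ≤ π := le_trans (hθle _ (by omega)) (by linarith)
        rw [ha n hn, ih hn, sqrt_two_add_two_cos hθ1 hθ2, hhalf]
  -- b k = tan (π / 2^(k+2))
  have hb' : ∀ k, 1 ≤ k → b k = Real.tan (π / 2 ^ (k + 2)) := by
    intro k hk
    have hθ1 : 0 ≤ π / 2 ^ (k + 1) := (hθpos _).le
    have hθ2 : π / 2 ^ (k + 1) ≤ π := le_trans (hθle _ (by omega)) (by linarith)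
    rw [hb k hk, ha' k hk, ha' (k + 1) (by omega), show (2:ℝ) - 2 * Real.cos (π / 2 ^ (k+1))
      = 2 - 2 * Real.cos (π / 2 ^ (k+1)) from rfl]
    rw [sqrt_two_sub_two_cos hθ1 hθ2, hhalf, Real.tan_eq_sin_div_cos]
    rw [show k + 1 + 1 = k + 2 from rfl]
    rw [mul_div_mul_left _ _ (by norm_num : (2:ℝ) ≠ 0)]
  -- cos positivity helper
  have hcospos : ∀ x : ℝ, 0 ≤ x → x < π / 2 → 0 < Real.cos x := by
    intro x h1 h2
    exact Real.cos_pos_of_mem_Ioo ⟨by linarith, h2⟩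
  have hθlt : ∀ m : ℕ, 3 ≤ m → π / 2 ^ m < π / 4 := by
    intro m hm
    apply div_lt_div_of_pos_left hpi (by norm_num)
    calc (4 : ℝ) < 2 ^ 3 := by norm_num
    _ ≤ 2 ^ m := by apply pow_le_pow_right₀ (by norm_num) hm
  -- c k = tan (π/4 - π / 2^(k+2))
  have hc' : ∀ k, 1 ≤ k → c k = Real.tan (π / 4 - π / 2 ^ (k + 2)) := by
    intro k hk
    induction k with
    | zero => omega
    | succ n ih =>
      rcases Nat.lt_or_ge n 1 with hn | hn
      · interval_cases n
        rw [hc1, hb' 1 le_rfl]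
        norm_num
        rw [show π/4 - π/8 = π/8 by ring]
      · have hab : (π / 4 - π / 2 ^ (n + 2)) + π / 2 ^ (n + 3) = π / 4 - π / 2 ^ (n + 1 + 2) := by
          rw [show n + 1 + 2 = (n + 2) + 1 from rfl, pow_succ]; ring
        have hαpos : 0 ≤ π / 4 - π / 2 ^ (n + 2) := by
          have := hθlt (n + 2) (by omega); linarith
        have hαlt : π / 4 - π / 2 ^ (n + 2) < π / 2 := by
          have := hθpos (n + 2); linarith
        have hβpos : 0 < π / 2 ^ (n + 3) := hθpos _
        have hβlt : π / 2 ^ (n + 3) < π / 2 := lt_of_lt_of_le (hθlt _ (by omega)) (by linarith)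
        have habpos : 0 ≤ (π / 4 - π / 2 ^ (n + 2)) + π / 2 ^ (n + 3) := by positivity
        have hablt : (π / 4 - π / 2 ^ (n + 2)) + π / 2 ^ (n + 3) < π / 2 := by
          rw [hab]; have := hθpos (n + 1 + 2); linarith
        have hcα : Real.cos (π / 4 - π / 2 ^ (n + 2)) ≠ 0 := (hcospos _ hαpos hαlt).ne'
        have hcβ : Real.cos (π / 2 ^ (n + 3)) ≠ 0 := (hcospos _ hβpos.le hβlt).ne'
        have hcαβ : Real.cos ((π / 4 - π / 2 ^ (n + 2)) + π / 2 ^ (n + 3)) ≠ 0 :=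
          (hcospos _ habpos hablt).ne'
        have e1 : c (n + 1) = Real.tan ((π / 4 - π / 2 ^ (n + 2)) + π / 2 ^ (n + 3)) := by
          rw [hc n hn, ih hn, hb' (n + 1) (by omega), show n + 1 + 2 = n + 3 from rfl,
            tan_add'' hcα hcβ hcαβ]
        rw [e1, hab]
  -- main rewrite: for k ≥ 1, 2^(k+1) * (1 - c k) = π * (tan x / x) / (1 + tan x), x = π/2^(k+2)
  have key : ∀ k, 1 ≤ k → 2 ^ (k + 1) * (1 - c k)
      = π * (Real.tan (π / 2 ^ (k + 2)) / (π / 2 ^ (k + 2))) / (1 + Real.tan (π / 2 ^ (k + 2))) := by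
    intro k hk
    set x := π / 2 ^ (k + 2) with hxdef
    have hxpos : 0 < x := hθpos _
    have hxlt : x < π / 4 := hθlt _ (by omega)
    have hcx : 0 < Real.cos x := hcospos x hxpos.le (by linarith)
    have hsx : 0 < Real.sin x := Real.sin_pos_of_pos_of_lt_pi hxpos (by linarith)
    have htx : 0 < Real.tan x := by
      rw [Real.tan_eq_sin_div_cos]; positivity
    have h1t : (1 : ℝ) + Real.tan x ≠ 0 := by positivity
    -- tan (π/4 - x) = (1 - tan x)/(1 + tan x)
    have htan : Real.tan (π / 4 - x) = (1 - Real.tan x) / (1 + Real.tan x) := by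
      rw [Real.tan_eq_sin_div_cos, Real.sin_sub, Real.cos_sub, Real.sin_pi_div_four,
        Real.cos_pi_div_four, Real.tan_eq_sin_div_cos]
      have h2 : (0:ℝ) < Real.sqrt 2 := Real.sqrt_pos.mpr (by norm_num)
      have hden : Real.sqrt 2 / 2 * Real.cos x + Real.sqrt 2 / 2 * Real.sin x ≠ 0 := by
        positivity
      have hden2 : Real.cos x + Real.sin x ≠ 0 := by positivity
      field_simp
    rw [hc' k hk, ← hxdef, htan]
    have h2x : (2 : ℝ) ^ (k + 2) * x = π := by
      rw [hxdef]; field_simp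
    have : (1 : ℝ) - (1 - Real.tan x) / (1 + Real.tan x) = 2 * Real.tan x / (1 + Real.tan x) := by
      field_simp; ring
    rw [this, ← h2x]
    field_simp
    ring
  -- the limit
  have hxk : Tendsto (fun k : ℕ => π / 2 ^ (k + 2)) atTop (𝓝[≠] (0 : ℝ)) := by
    have h0 : Tendsto (fun k : ℕ => π / 2 ^ (k + 2)) atTop (𝓝 0) := by
      have h1 : Tendsto (fun k : ℕ => ((1:ℝ)/2) ^ k) atTop (𝓝 0) :=
        tendsto_pow_atTop_nhds_zero_of_lt_one (by norm_num) (by norm_num)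
      have h2 := h1.const_mul (π / 4)
      rw [mul_zero] at h2
      refine h2.congr fun k => ?_
      rw [div_pow, one_pow, pow_add]
      have : (2:ℝ) ^ k ≠ 0 := by positivity
      field_simp
      ring_nf
      try exact Or.inl trivial
    apply tendsto_nhdsWithin_of_tendsto_nhds_of_eventually_within _ h0
    filter_upwards with k
    exact (hθpos (k + 2)).ne'
  have htandiv : Tendsto (fun x : ℝ => Real.tan x / x) (𝓝[≠] (0:ℝ)) (𝓝 1) := by
    have hd : HasDerivAt Real.tan 1 0 := by
      have := Real.hasDerivAt_tan (x := 0) (by simp)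
      simpa using this
    have := hasDerivAt_iff_tendsto_slope.mp hd
    refine this.congr (fun y => ?_)
    simp [slope_def_field, div_eq_inv_mul]
  have htan1 : Tendsto (fun x : ℝ => 1 + Real.tan x) (𝓝[≠] (0:ℝ)) (𝓝 1) := by
    have hct : ContinuousAt Real.tan 0 := Real.continuousAt_tan.mpr (by simp)
    have : Tendsto (fun x : ℝ => 1 + Real.tan x) (𝓝 (0:ℝ)) (𝓝 (1 + Real.tan 0)) :=
      (continuousAt_const.add hct).tendsto
    simp only [Real.tan_zero, add_zero] at this
    exact this.mono_left nhdsWithin_le_nhds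
  have hF : Tendsto (fun x : ℝ => π * (Real.tan x / x) / (1 + Real.tan x)) (𝓝[≠] (0:ℝ))
      (𝓝 π) := by
    have := ((tendsto_const_nhds (x := π) (f := 𝓝[≠] (0:ℝ))).mul htandiv).div htan1
      (by norm_num)
    simpa [Pi.div_def] using this
  have hcomp : Tendsto (fun k : ℕ =>
      π * (Real.tan (π / 2 ^ (k + 2)) / (π / 2 ^ (k + 2))) / (1 + Real.tan (π / 2 ^ (k + 2))))
      atTop (𝓝 π) := hF.comp hxk
  apply hcomp.congr'
  filter_upwards [eventually_ge_atTop 1] with k hk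
  exact (key k hk).symm
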